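/- There exists a two-player stochastic game G with payoffs bounded in [−1,1] such that for every defender strategy D there is an oblivious adversary A with limsup_{T→∞} Regret⁰(D, A, G, T, F) > 0, where F is the set of fixed strategies; i.e., no (even inefficient) oblivious regret minimization algorithm exists for general stochastic games. -/

import Mathlib

open Filter

/-- Payoff of the counterexample stochastic game: states are `Bool`
(`false = σ₁`, `true = σ₂`, the absorbing sink); defender actions are `Bool`
(`true = d₁`, `false = d₂`).  `P(d₁,σ₁) = −1`, `P(d₂,σ₁) = 0`,
`P(·,σ₂) = 1`; payoffs lie in `[−1,1]`. -/
def cPay (d : Bool) (σ : Bool) : ℝ := if σ then 1 else if d then -1 else 0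

/-- Transition: `σ₁ → σ₂` occurs exactly when the joint action `(d₁, a₁)` is
played (adversary actions are `Bool`, `true = a₁`); `σ₂` is a sink. -/
def cStep (σ d a : Bool) : Bool := σ || (d && a)

/-- The defender's action at round `t` against the oblivious adversary action
sequence `a`, for a (history-dependent) defender strategy `D` that observes
the past adversary actions. -/
def dAct (D : List Bool → Bool) (a : ℕ → Bool) (t : ℕ) : Bool :=
  D (List.ofFn fun i : Fin t => a i)

/-- State trajectory under the defender strategy `D`. -/
def dState (D : List Bool → Bool) (a : ℕ → Bool) : ℕ → Bool
  | 0 => false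
  | t + 1 => cStep (dState D a t) (dAct D a t) (a t)

/-- Total payoff of the defender strategy `D` over `T` rounds. -/
def dTotal (D : List Bool → Bool) (a : ℕ → Bool) (T : ℕ) : ℝ :=
  ∑ t ∈ Finset.range T, cPay (dAct D a t) (dState D a t)

/-- State trajectory under a fixed strategy `f : state → action`. -/
def fState (f : Bool → Bool) (a : ℕ → Bool) : ℕ → Bool
  | 0 => false
  | t + 1 => cStep (fState f a t) (f (fState f a t)) (a t)

/-- Total payoff of the fixed strategy `f` over `T` rounds. -/
def fTotal (f : Bool → Bool) (a : ℕ → Bool) (T : ℕ) : ℝ :=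
  ∑ t ∈ Finset.range T, cPay (f (fState f a t)) (fState f a t)

/-- Average oblivious regret at horizon `T`: the best fixed strategy's average
payoff minus the defender's average payoff, against the same oblivious
adversary action sequence `a`. -/
noncomputable def regret0 (D : List Bool → Bool) (a : ℕ → Bool) (T : ℕ) : ℝ :=
  (⨆ f : Bool → Bool, fTotal f a T / T) - dTotal D a T / T

/-- history list of adversary actions -/
def advList (D : List Bool → Bool) : ℕ → List Bool
  | 0 => []
  | t + 1 => (advList D t) ++ [! D (advList D t)]

/-- the adversary: plays the opposite of the defender's action each round -/
def adv (D : List Bool → Bool) (t : ℕ) : Bool := ! D (advList D t)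

lemma advList_eq (D : List Bool → Bool) (t : ℕ) :
    (List.ofFn fun i : Fin t => adv D i) = advList D t := by
  induction t with
  | zero => simp [advList]
  | succ t ih =>
    rw [List.ofFn_succ', List.concat_eq_append]
    have h : (List.ofFn fun i : Fin t => adv D i.castSucc) = advList D t := by
      simpa using ih
    rw [advList, h]
    simp only [Fin.val_last]
    rfl

lemma dAct_adv (D : List Bool → Bool) (t : ℕ) :
    dAct D (adv D) t = ! adv D t := by
  rw [dAct, advList_eq]
  simp [adv]

lemma dState_adv (D : List Bool → Bool) (t : ℕ) :
    dState D (adv D) t = false := by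
  induction t with
  | zero => rfl
  | succ t ih =>
    simp [dState, ih, cStep, dAct_adv]

lemma dTotal_le (D : List Bool → Bool) (T : ℕ) : dTotal D (adv D) T ≤ 0 := by
  apply Finset.sum_nonpos
  intro t _
  rw [dState_adv]
  simp only [cPay]
  cases dAct D (adv D) t <;> norm_num

lemma dTotal_ge (D : List Bool → Bool) (T : ℕ) : -(T : ℝ) ≤ dTotal D (adv D) T := by
  calc -(T:ℝ) = ∑ _t ∈ Finset.range T, (-1:ℝ) := by simp
    _ ≤ _ := by
        apply Finset.sum_le_sum
        intro t _
        rw [dState_adv]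
        simp only [cPay]
        cases dAct D (adv D) t <;> norm_num

lemma fTotal_le (f : Bool → Bool) (a : ℕ → Bool) (T : ℕ) : fTotal f a T ≤ T := by
  calc fTotal f a T ≤ ∑ _t ∈ Finset.range T, (1:ℝ) := by
        apply Finset.sum_le_sum
        intro t _
        simp only [cPay]
        split_ifs <;> norm_num
    _ = T := by simp

lemma sup_le_one (a : ℕ → Bool) (T : ℕ) :
    (⨆ f : Bool → Bool, fTotal f a T / T) ≤ 1 := by
  apply ciSup_le
  intro f
  rcases Nat.eq_zero_or_pos T with h | h
  · simp [h, fTotal]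
  · rw [div_le_one (by exact_mod_cast h)]
    exact fTotal_le f a T

lemma le_sup (a : ℕ → Bool) (T : ℕ) (f : Bool → Bool) :
    fTotal f a T / T ≤ ⨆ g : Bool → Bool, fTotal g a T / T :=
  le_ciSup (Set.Finite.bddAbove (Set.finite_range fun g : Bool → Bool => fTotal g a T / (T:ℝ))) f

lemma regret_le_two (D : List Bool → Bool) (T : ℕ) : regret0 D (adv D) T ≤ 2 := by
  unfold regret0
  have h1 := sup_le_one (adv D) T
  have h2 : -1 ≤ dTotal D (adv D) T / T := by
    rcases Nat.eq_zero_or_pos T with h | h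
    · simp [h]
    · rw [le_div_iff₀ (by exact_mod_cast h)]
      have := dTotal_ge D T
      linarith
  linarith


/-- in this stochastic game (with payoffs in `[−1,1]`), for
every defender strategy `D` there is an oblivious adversary `a` such that the
average oblivious regret does not vanish:
`limsup_{T→∞} Regret⁰(D, a, G, T, F) > 0`.  Hence no oblivious regret
minimization algorithm exists for general stochastic games. -/
theorem no_regret_minimization_stochastic :
    ∀ D : List Bool → Bool, ∃ a : ℕ → Bool,
      0 < Filter.limsup (fun T : ℕ => regret0 D a T) Filter.atTop := by
  intro D
  refine ⟨adv D, ?_⟩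
  have hbdd : IsBoundedUnder (· ≤ ·) atTop (fun T : ℕ => regret0 D (adv D) T) :=
    ⟨2, Filter.eventually_map.mpr (Filter.Eventually.of_forall (regret_le_two D))⟩
  have hdt : ∀ T : ℕ, 0 < T → dTotal D (adv D) T / T ≤ 0 := by
    intro T hT
    apply div_nonpos_of_nonpos_of_nonneg (dTotal_le D T) (by positivity)
  -- case split
  by_cases hA : ∀ t, adv D t = false
  · -- defender always plays d₁, payoff -1 each round; fixed d₂ earns 0
    have key : ∀ T : ℕ, 1 ≤ T → (1:ℝ) ≤ regret0 D (adv D) T := by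
      intro T hT
      have hT' : (0:ℝ) < T := by exact_mod_cast hT
      have hdtot : dTotal D (adv D) T = -T := by
        unfold dTotal
        have hc : ∀ t ∈ Finset.range T,
            cPay (dAct D (adv D) t) (dState D (adv D) t) = -1 := by
          intro t _
          rw [dState_adv, dAct_adv, hA t]
          simp [cPay]
        rw [Finset.sum_congr rfl hc]
        simp
      have hst : ∀ t, fState (fun _ => false) (adv D) t = false := by
        intro t
        induction t with
        | zero => rfl
        | succ t ih => simp [fState, ih, cStep]
      have hf : fTotal (fun _ => false) (adv D) T = 0 := by
        unfold fTotal
        apply Finset.sum_eq_zero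
        intro t _
        simp [hst, cPay]
      have h1 : (0:ℝ) ≤ ⨆ f : Bool → Bool, fTotal f (adv D) T / T := by
        have := le_sup (adv D) T (fun _ => false)
        rw [hf] at this
        simpa using this
      unfold regret0
      rw [hdtot]
      have : -(T:ℝ) / T = -1 := by field_simp
      rw [this]
      linarith
    have freq : ∃ᶠ T : ℕ in atTop, (1:ℝ) ≤ regret0 D (adv D) T :=
      (Filter.eventually_atTop.mpr ⟨1, key⟩).frequently
    have := Filter.le_limsup_of_frequently_le freq hbdd
    linarith
  · push_neg at hA
    obtain ⟨t₀, ht₀⟩ := hA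
    have ht₀' : adv D t₀ = true := by simpa using ht₀
    -- fixed strategy "always d₁" reaches the sink by round t₀+1
    have hst : ∀ t, t₀ + 1 ≤ t → fState (fun _ => true) (adv D) t = true := by
      intro t ht
      induction t with
      | zero => omega
      | succ t ih =>
        rcases Nat.lt_or_ge t (t₀+1) with h | h
        · have : t = t₀ := by omega
          subst this
          simp [fState, cStep, ht₀']
        · simp [fState, cStep, ih h]
    have key : ∀ T : ℕ, 4 * (t₀ + 1) ≤ T → (1:ℝ)/2 ≤ regret0 D (adv D) T := by
      intro T hT
      have hTpos : 0 < T := by omega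
      have hT' : (0:ℝ) < T := by exact_mod_cast hTpos
      have hf : (T:ℝ) - 2 * (t₀ + 1) ≤ fTotal (fun _ => true) (adv D) T := by
        have hsplit : Finset.range T = Finset.range (t₀+1) ∪ Finset.Ico (t₀+1) T := by
          simp only [Finset.range_eq_Ico]
          exact (Finset.Ico_union_Ico_eq_Ico (by omega) (by omega)).symm
        unfold fTotal
        rw [hsplit, Finset.sum_union (by
          rw [Finset.range_eq_Ico]
          exact Finset.Ico_disjoint_Ico_consecutive 0 (t₀+1) T)]
        have h1 : -((t₀:ℝ)+1) ≤ ∑ t ∈ Finset.range (t₀+1),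
            cPay ((fun _ => true) (fState (fun _ => true) (adv D) t)) (fState (fun _ => true) (adv D) t) := by
          calc -((t₀:ℝ)+1) = ∑ _t ∈ Finset.range (t₀+1), (-1:ℝ) := by push_cast; simp
            _ ≤ _ := by
                apply Finset.sum_le_sum
                intro t _
                simp only [cPay]
                cases fState (fun _ => true) (adv D) t <;> norm_num
        have h2 : ∑ t ∈ Finset.Ico (t₀+1) T,
            cPay ((fun _ => true) (fState (fun _ => true) (adv D) t)) (fState (fun _ => true) (adv D) t)
            = (T:ℝ) - (t₀+1) := by
          have hc : ∀ t ∈ Finset.Ico (t₀+1) T,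
              cPay ((fun _ => true) (fState (fun _ => true) (adv D) t))
                (fState (fun _ => true) (adv D) t) = 1 := by
            intro t htm
            rw [hst t (Finset.mem_Ico.mp htm).1]
            simp [cPay]
          rw [Finset.sum_congr rfl hc, Finset.sum_const, Nat.card_Ico, nsmul_eq_mul, mul_one]
          push_cast [Nat.cast_sub (show t₀+1 ≤ T by omega)]
          ring
        rw [h2]
        linarith
      have hsup : ((T:ℝ) - 2 * (t₀ + 1)) / T ≤ ⨆ f : Bool → Bool, fTotal f (adv D) T / T := by
        refine le_trans ?_ (le_sup (adv D) T (fun _ => true))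
        gcongr
      unfold regret0
      have hd := hdt T hTpos
      have hfrac : (1:ℝ)/2 ≤ ((T:ℝ) - 2 * (t₀ + 1)) / T := by
        rw [le_div_iff₀ hT']
        have : 4 * ((t₀:ℝ) + 1) ≤ T := by exact_mod_cast hT
        linarith
      linarith
    have freq : ∃ᶠ T : ℕ in atTop, (1:ℝ)/2 ≤ regret0 D (adv D) T :=
      (Filter.eventually_atTop.mpr ⟨4*(t₀+1), key⟩).frequently
    have := Filter.le_limsup_of_frequently_le freq hbdd
    linarith
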